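/- Factorization property: Let A be an alphabet of cardinality m and B an alphabet of cardinality n. Let I = (i_1 ≤ ... ≤ i_m) and J = (j_1 ≤ ... ≤ j_s) be partitions. Then the Schur function of the partition (j_1, ..., j_s, i_1 + n, ..., i_m + n) satisfies S_{(j_1,...,j_s,i_1+n,...,i_m+n)}(A - B) = S_I(A) · R(A,B) · S_J(-B), where R(A,B) = ∏_{a∈A, b∈B}(a-b), S_I(A) is the ordinary Schur polynomial of A, and S_J(-B) = S_J(∅ - B). -/

import Mathlib

/-- The generating series `∏_{a ∈ A} (1 - a z)` of an alphabet `A` (a finite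
multiset of elements of a commutative ring `R`). -/
noncomputable def gen {R : Type*} [CommRing R] (A : Multiset R) : PowerSeries R :=
  (A.map (fun a => 1 - PowerSeries.C a * PowerSeries.X)).prod

/-- `IsSeriesOf A B S` says that `S : ℤ → R` is the family of complete functions
`S_j(A - B)` of the difference of alphabets `A - B`, i.e. `S j = 0` for `j < 0` and
`∑_j S_j z^j = ∏_{b ∈ B}(1 - b z) / ∏_{a ∈ A}(1 - a z)`, formulated as
`(∑_j S_j z^j) · ∏_{a ∈ A}(1 - a z) = ∏_{b ∈ B}(1 - b z)` in `R⟦z⟧`. -/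
def IsSeriesOf {R : Type*} [CommRing R] (A B : Multiset R) (S : ℤ → R) : Prop :=
  (∀ j : ℤ, j < 0 → S j = 0) ∧
    (PowerSeries.mk fun n : ℕ => S (n : ℤ)) * gen A = gen B

/-- The Schur function `S_I(A - B)` of a finite sequence `I = (i_1, …, i_s)`
(written in increasing, "French", order), given the complete functions
`S = (S_j(A-B))_j`, defined by the Jacobi–Trudi determinant
`det(S_{i_p + p - q})_{1 ≤ p,q ≤ s}`. -/
noncomputable def schur {R : Type*} [CommRing R] (S : ℤ → R) {s : ℕ} (I : Fin s → ℤ) : R :=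
  Matrix.det (Matrix.of fun p q : Fin s => S (I p + (p : ℤ) - (q : ℤ)))


namespace FactorAux

open PowerSeries Finset Matrix

variable {R : Type*} [CommRing R]

/-- integer-indexed coefficient of a power series -/
noncomputable def cZ (f : PowerSeries R) (k : ℤ) : R :=
  if 0 ≤ k then PowerSeries.coeff k.toNat f else 0

lemma cZ_neg (f : PowerSeries R) {k : ℤ} (h : k < 0) : cZ f k = 0 := if_neg (not_le.2 h)

lemma cZ_coe (f : PowerSeries R) (n : ℕ) : cZ f (n : ℤ) = PowerSeries.coeff n f := by
  simp [cZ]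

lemma gen_zero : gen (0 : Multiset R) = 1 := by simp [gen]

lemma gen_cons (a : R) (A : Multiset R) :
    gen (a ::ₘ A) = (1 - PowerSeries.C a * PowerSeries.X) * gen A := by
  simp [gen, Multiset.map_cons, Multiset.prod_cons]

lemma constantCoeff_gen (A : Multiset R) : PowerSeries.constantCoeff (gen A) = 1 := by
  induction A using Multiset.induction_on with
  | empty => simp [gen_zero]
  | cons a A ih => simp [gen_cons, ih]

lemma gen_mul_invOfUnit (A : Multiset R) :
    gen A * PowerSeries.invOfUnit (gen A) 1 = 1 :=
  PowerSeries.mul_invOfUnit _ _ (by simp [constantCoeff_gen])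

lemma coeff_cons (a : R) (f : PowerSeries R) (k : ℕ) :
    PowerSeries.coeff k ((1 - PowerSeries.C a * PowerSeries.X) * f) =
      PowerSeries.coeff k f - a * (if k = 0 then 0 else PowerSeries.coeff (k - 1) f) := by
  have : (1 - PowerSeries.C a * PowerSeries.X) * f = f - PowerSeries.C a * (PowerSeries.X * f) := by
    ring
  rw [this, map_sub, PowerSeries.coeff_C_mul]
  cases k with
  | zero => simp
  | succ k => simp [PowerSeries.coeff_succ_X_mul]

lemma coeff_gen_eq_zero (A : Multiset R) {k : ℕ} (h : Multiset.card A < k) :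
    PowerSeries.coeff k (gen A) = 0 := by
  induction A using Multiset.induction_on generalizing k with
  | empty =>
      simp only [Multiset.card_zero] at h
      rw [gen_zero, PowerSeries.coeff_one, if_neg (by omega)]
  | cons a A ih =>
      rw [gen_cons, coeff_cons]
      simp only [Multiset.card_cons] at h
      rw [ih (by omega), ih (by omega)]
      simp

lemma cZ_gen_eq_zero (A : Multiset R) {k : ℤ} (h : (Multiset.card A : ℤ) < k) :
    cZ (gen A) k = 0 := by
  have hk : 0 ≤ k := le_trans (Int.ofNat_nonneg _) h.le
  rw [cZ, if_pos hk, coeff_gen_eq_zero _ (by omega)]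

lemma cZ_cons (a : R) (A : Multiset R) (k : ℤ) :
    cZ (gen (a ::ₘ A)) k = cZ (gen A) k - a * cZ (gen A) (k - 1) := by
  rcases lt_or_ge k 0 with hk | hk
  · rw [cZ_neg _ hk, cZ_neg _ hk, cZ_neg _ (by omega)]; ring
  · obtain ⟨K, rfl⟩ := Int.eq_ofNat_of_zero_le hk
    rw [cZ_coe, gen_cons, coeff_cons]
    cases K with
    | zero =>
        rw [if_pos rfl, cZ_coe, cZ_neg (gen A) (show ((0:ℕ):ℤ) - 1 < 0 by norm_num)]
        try ring
    | succ K =>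
        rw [if_neg (by omega), cZ_coe]
        rw [show ((K+1:ℕ):ℤ) - 1 = ((K:ℕ):ℤ) by push_cast; ring, cZ_coe]
        simp

/-- Main convolution identity. -/
lemma conv {A B : Multiset R} {S : ℤ → R} (hS : IsSeriesOf A B S) {M : ℕ}
    (hM : Multiset.card A ≤ M) (k : ℤ) :
    ∑ j ∈ Finset.range (M + 1), cZ (gen A) j * S (k - j) = cZ (gen B) k := by
  rcases lt_or_ge k 0 with hk | hk
  · rw [cZ_neg _ hk]
    refine Finset.sum_eq_zero fun j _ => ?_
    rw [hS.1 _ (by omega), mul_zero]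
  · obtain ⟨K, rfl⟩ := Int.eq_ofNat_of_zero_le hk
    have h1 : cZ (gen B) (K : ℤ) =
        ∑ i ∈ Finset.range (K + 1), S (i : ℤ) * PowerSeries.coeff (K - i) (gen A) := by
      rw [cZ_coe, ← hS.2, PowerSeries.coeff_mul]
      simp only [PowerSeries.coeff_mk]
      rw [Finset.Nat.sum_antidiagonal_eq_sum_range_succ
          (fun i j => S (i : ℤ) * PowerSeries.coeff j (gen A))]
    -- reflect the sum
    set F : ℕ → R := fun j => cZ (gen A) j * S ((K : ℤ) - j) with hF
    have h2 : ∑ i ∈ Finset.range (K + 1), S (i : ℤ) * PowerSeries.coeff (K - i) (gen A) =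
        ∑ j ∈ Finset.range (K + 1), F j := by
      rw [← Finset.sum_range_reflect F (K + 1)]
      refine Finset.sum_congr rfl fun i hi => ?_
      have hi' : i ≤ K := by simpa [Nat.lt_succ_iff] using hi
      have e1 : K + 1 - 1 - i = K - i := by omega
      have e2 : ((K : ℤ) - ((K - i : ℕ) : ℤ)) = (i : ℤ) := by
        have : ((K - i : ℕ) : ℤ) = (K : ℤ) - i := by omega
        omega
      rw [hF, e1]
      simp only [cZ_coe, e2]
      ring
    -- compare ranges via a common superset
    have key : ∀ L : ℕ, K ≤ L → M ≤ L →
        ∑ j ∈ Finset.range (L + 1), F j = ∑ j ∈ Finset.range (K + 1), F j ∧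
        ∑ j ∈ Finset.range (L + 1), F j = ∑ j ∈ Finset.range (M + 1), F j := by
      intro L hK hM'
      constructor
      · refine (Finset.sum_subset (Finset.range_subset_range.2 (by omega)) fun x _ hx => ?_).symm
        have : K < x := by simp only [Finset.mem_range] at hx ⊢; omega
        rw [hF]
        simp only []
        rw [hS.1 _ (by omega), mul_zero]
      · refine (Finset.sum_subset (Finset.range_subset_range.2 (by omega)) fun x _ hx => ?_).symm
        have : M < x := by simp only [Finset.mem_range] at hx ⊢; omega
        rw [hF]
        simp only []
        rw [cZ_gen_eq_zero _ (by omega), zero_mul]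
    obtain ⟨hL1, hL2⟩ := key (max K M) (le_max_left _ _) (le_max_right _ _)
    rw [h1, h2, ← hL1, hL2]

/-- `∑_r (gen A)_r b^(m-r) = ∏_{a ∈ A} (b - a)`. -/
lemma poly_sum (A : Multiset R) (b : R) :
    ∑ r ∈ Finset.range (Multiset.card A + 1), cZ (gen A) r * b ^ (Multiset.card A - r) =
      (A.map fun a => b - a).prod := by
  induction A using Multiset.induction_on with
  | empty =>
      simp [cZ_coe, gen_zero]
  | cons a A ih =>
      simp only [Multiset.card_cons, Multiset.map_cons, Multiset.prod_cons]
      have hsplit : ∀ r : ℕ, cZ (gen (a ::ₘ A)) r = cZ (gen A) r - a * cZ (gen A) ((r : ℤ) - 1) :=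
        fun r => cZ_cons a A r
      calc ∑ r ∈ Finset.range (Multiset.card A + 1 + 1),
              cZ (gen (a ::ₘ A)) r * b ^ (Multiset.card A + 1 - r)
          = (∑ r ∈ Finset.range (Multiset.card A + 1 + 1),
              cZ (gen A) r * b ^ (Multiset.card A + 1 - r)) -
            a * ∑ r ∈ Finset.range (Multiset.card A + 1 + 1),
              cZ (gen A) ((r : ℤ) - 1) * b ^ (Multiset.card A + 1 - r) := by
            rw [Finset.mul_sum, ← Finset.sum_sub_distrib]
            refine Finset.sum_congr rfl fun r _ => ?_
            rw [hsplit r]; ring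
        _ = b * (∑ r ∈ Finset.range (Multiset.card A + 1),
              cZ (gen A) r * b ^ (Multiset.card A - r)) -
            a * ∑ r ∈ Finset.range (Multiset.card A + 1),
              cZ (gen A) r * b ^ (Multiset.card A - r) := by
            congr 1
            · rw [Finset.sum_range_succ, cZ_gen_eq_zero _ (by push_cast; omega), zero_mul,
                add_zero, Finset.mul_sum]
              refine Finset.sum_congr rfl fun r hr => ?_
              have hr' : r ≤ Multiset.card A := by
                simp only [Finset.mem_range] at hr; omega
              rw [show Multiset.card A + 1 - r = (Multiset.card A - r) + 1 by omega, pow_succ]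
              ring
            · congr 1
              rw [Finset.sum_range_succ']
              simp only [Nat.cast_add, Nat.cast_one, add_sub_cancel_right, Nat.cast_zero]
              rw [cZ_neg _ (by norm_num), zero_mul, add_zero]
              refine Finset.sum_congr rfl fun r hr => ?_
              rw [show Multiset.card A + 1 - (r + 1) = Multiset.card A - r from by omega]
        _ = (b - a) * (A.map fun a => b - a).prod := by rw [ih]; ring

lemma prod_map_sub_comm (A : Multiset R) (b : R) :
    (A.map fun a => b - a).prod = (-1) ^ (Multiset.card A) * (A.map fun a => a - b).prod := by
  induction A using Multiset.induction_on with
  | empty => simp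
  | cons a A ih =>
      simp only [Multiset.map_cons, Multiset.prod_cons, Multiset.card_cons, ih, pow_succ]
      ring

lemma eq_cZ_of_isSeriesOf_zero {B : Multiset R} {S : ℤ → R} (hS : IsSeriesOf 0 B S) (k : ℤ) :
    S k = cZ (gen B) k := by
  rcases lt_or_ge k 0 with hk | hk
  · rw [hS.1 _ hk, cZ_neg _ hk]
  · obtain ⟨K, rfl⟩ := Int.eq_ofNat_of_zero_le hk
    have h2 := hS.2
    rw [gen_zero, mul_one] at h2
    rw [cZ_coe, ← h2, PowerSeries.coeff_mk]

lemma eq_of_isSeriesOf_zero' {A : Multiset R} {S SA : ℤ → R}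
    (hS : IsSeriesOf A 0 S) (hSA : IsSeriesOf A 0 SA) (k : ℤ) : S k = SA k := by
  rcases lt_or_ge k 0 with hk | hk
  · rw [hS.1 _ hk, hSA.1 _ hk]
  · obtain ⟨K, rfl⟩ := Int.eq_ofNat_of_zero_le hk
    have h1 := hS.2; have h2 := hSA.2
    rw [gen_zero] at h1 h2
    have : PowerSeries.mk (fun n : ℕ => S (n : ℤ)) = PowerSeries.mk (fun n : ℕ => SA (n : ℤ)) := by
      calc PowerSeries.mk (fun n : ℕ => S (n : ℤ))
          = PowerSeries.mk (fun n : ℕ => S (n : ℤ)) *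
              (PowerSeries.mk (fun n : ℕ => SA (n : ℤ)) * gen A) := by rw [h2, mul_one]
        _ = PowerSeries.mk (fun n : ℕ => SA (n : ℤ)) *
              (PowerSeries.mk (fun n : ℕ => S (n : ℤ)) * gen A) := by ring
        _ = PowerSeries.mk (fun n : ℕ => SA (n : ℤ)) := by rw [h1, mul_one]
    have := congrArg (PowerSeries.coeff K) this
    simpa [PowerSeries.coeff_mk] using this

section MatrixAux

variable {m : ℕ}

/-- The bidiagonal column-operation matrix `W`. -/
def Wmat (m : ℕ) (b : R) : Matrix (Fin (m+1)) (Fin (m+1)) R :=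
  Matrix.of (fun r q : Fin (m+1) =>
    (if r = q then (1:R) else 0) +
      (if h : (q : ℕ) + 1 < m + 1 then
        (if r = (⟨(q:ℕ)+1, h⟩ : Fin (m+1)) then -b else 0) else 0))

/-- The column-operation matrix `U` putting a given vector in column `0`. -/
def Umat (m : ℕ) (g : Fin (m+1) → R) : Matrix (Fin (m+1)) (Fin (m+1)) R :=
  Matrix.of (fun r q : Fin (m+1) =>
    if q = 0 then g r else if r = q then (1:R) else 0)

lemma det_Wmat (b : R) : (Wmat m b).det = 1 := by
  have htri : (Wmat m b).BlockTriangular OrderDual.toDual := by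
    intro i j hij
    have hij' : i < j := by simpa using hij
    have hv : (i : ℕ) < (j : ℕ) := hij'
    simp only [Wmat, Matrix.of_apply]
    rw [if_neg (Fin.ne_of_lt hij')]
    by_cases h : (j : ℕ) + 1 < m + 1
    · rw [dif_pos h, if_neg (by
        intro hh
        have h2 : (i : ℕ) = (j : ℕ) + 1 := congrArg Fin.val hh
        omega)]
      ring
    · rw [dif_neg h]; ring
  rw [Matrix.det_of_lowerTriangular _ htri]
  refine Finset.prod_eq_one fun i _ => ?_
  simp only [Wmat, Matrix.of_apply]
  rw [if_pos trivial]
  by_cases h : (i : ℕ) + 1 < m + 1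
  · rw [dif_pos h, if_neg (by
      intro hh
      have h2 : (i : ℕ) = (i : ℕ) + 1 := congrArg Fin.val hh
      omega)]
    norm_num
  · rw [dif_neg h]; norm_num

lemma det_Umat (g : Fin (m+1) → R) (hg : g 0 = 1) : (Umat m g).det = 1 := by
  have htri : (Umat m g).BlockTriangular OrderDual.toDual := by
    intro i j hij
    have hij' : i < j := by simpa using hij
    have hj : j ≠ 0 := by
      intro hh
      rw [hh] at hij'
      exact absurd hij' (Fin.not_lt_zero i)
    simp only [Umat, Matrix.of_apply]
    rw [if_neg hj, if_neg (Fin.ne_of_lt hij')]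
  rw [Matrix.det_of_lowerTriangular _ htri]
  refine Finset.prod_eq_one fun i _ => ?_
  simp only [Umat, Matrix.of_apply]
  rcases eq_or_ne i 0 with rfl | hi
  · rw [if_pos rfl, hg]
  · rw [if_neg hi]; norm_num

lemma Wmat_col (b : R) (x : Fin (m+1) → R) (q : Fin (m+1)) :
    (∑ r, x r * Wmat m b r q) =
      x q + (if h : (q:ℕ)+1 < m+1 then -b * x ⟨(q:ℕ)+1, h⟩ else 0) := by
  simp only [Wmat, Matrix.of_apply, mul_add]
  rw [Finset.sum_add_distrib]
  congr 1
  · have h1 : ∀ r ∈ Finset.univ,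
        x r * (if r = q then (1:R) else 0) = if r = q then x r else 0 := by
      intro r _; split <;> simp
    rw [Finset.sum_congr rfl h1, Finset.sum_ite_eq' Finset.univ q x,
      if_pos (Finset.mem_univ q)]
  · by_cases h : (q:ℕ)+1 < m+1
    · rw [dif_pos h]
      have h1 : ∀ r ∈ Finset.univ,
          (x r * if h : (q:ℕ)+1 < m+1 then
            (if r = (⟨(q:ℕ)+1, h⟩ : Fin (m+1)) then -b else 0) else 0) =
            if r = (⟨(q:ℕ)+1, h⟩ : Fin (m+1)) then -b * x r else 0 := by
        intro r _
        rw [dif_pos h]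
        split
        · ring
        · exact mul_zero _
      rw [Finset.sum_congr rfl h1,
        Finset.sum_ite_eq' Finset.univ (⟨(q:ℕ)+1, h⟩ : Fin (m+1)) (fun r => -b * x r),
        if_pos (Finset.mem_univ _)]
    · rw [dif_neg h]
      refine Finset.sum_eq_zero fun r _ => ?_
      rw [dif_neg h, mul_zero]

lemma Umat_col (g : Fin (m+1) → R) (x : Fin (m+1) → R) {q : Fin (m+1)} (hq : q ≠ 0) :
    (∑ r, x r * Umat m g r q) = x q := by
  have h1 : ∀ r ∈ Finset.univ,
      x r * Umat m g r q = if r = q then x r else 0 := by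
    intro r _
    simp only [Umat, Matrix.of_apply]
    rw [if_neg hq]
    split <;> simp
  rw [Finset.sum_congr rfl h1, Finset.sum_ite_eq' Finset.univ q x,
    if_pos (Finset.mem_univ q)]

lemma Umat_col0 (g : Fin (m+1) → R) (x : Fin (m+1) → R) :
    (∑ r, x r * Umat m g r 0) = ∑ r : Fin (m+1), x r * g r := by
  refine Finset.sum_congr rfl fun r _ => ?_
  simp [Umat]

end MatrixAux

/-- Key factorization lemma: `det(S_{c_p + |B| - q}(A-B)) = R(A,B) · det(S_{c_p-q}(A))`,
by induction on the alphabet `B`. -/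
lemma stepL (A : Multiset R) (SA : ℤ → R) (hSA : IsSeriesOf A 0 SA) (B : Multiset R) :
    ∀ (S : ℤ → R), IsSeriesOf A B S → ∀ (c : Fin (Multiset.card A) → ℤ), (∀ p, 0 ≤ c p) →
    (Matrix.of fun p q : Fin (Multiset.card A) =>
        S (c p + (Multiset.card B : ℤ) - ((q : ℕ) : ℤ))).det =
      (A.map fun a => (B.map fun x => a - x).prod).prod *
        (Matrix.of fun p q : Fin (Multiset.card A) => SA (c p - ((q : ℕ) : ℤ))).det := by
  induction B using Multiset.induction_on with
  | empty =>
      intro S hS c hc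
      have hfun : ∀ k, S k = SA k := eq_of_isSeriesOf_zero' hS hSA
      have hmat : (Matrix.of fun p q : Fin (Multiset.card A) =>
          S (c p + (Multiset.card (0 : Multiset R) : ℤ) - ((q : ℕ) : ℤ))) =
          Matrix.of fun p q : Fin (Multiset.card A) => SA (c p - ((q : ℕ) : ℤ)) := by
        ext p q
        simp only [Matrix.of_apply, Multiset.card_zero, Nat.cast_zero, add_zero]
        rw [hfun]
      rw [hmat]
      simp
  | cons b B' IH =>
      intro S hS c hc
      -- the inverse series and the series for `A - B'`
      have hAv : gen A * PowerSeries.invOfUnit (gen A) 1 = 1 := gen_mul_invOfUnit A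
      set v := PowerSeries.invOfUnit (gen A) 1 with hv
      set F := gen B' * v with hFdef
      set S' : ℤ → R := cZ F with hS'def
      have hmkS' : PowerSeries.mk (fun n : ℕ => S' (n : ℤ)) = F := by
        ext n; rw [PowerSeries.coeff_mk, hS'def, cZ_coe]
      have hS' : IsSeriesOf A B' S' := by
        refine ⟨fun j hj => cZ_neg _ hj, ?_⟩
        rw [hmkS', hFdef, mul_assoc, mul_comm v, hAv, mul_one]
      have hmkS : PowerSeries.mk (fun n : ℕ => S (n : ℤ)) =
          (1 - PowerSeries.C b * PowerSeries.X) * F := by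
        have h2 := hS.2
        rw [gen_cons] at h2
        calc PowerSeries.mk (fun n : ℕ => S (n : ℤ))
            = PowerSeries.mk (fun n : ℕ => S (n : ℤ)) * (gen A * v) := by rw [hAv, mul_one]
          _ = (PowerSeries.mk (fun n : ℕ => S (n : ℤ)) * gen A) * v := by ring
          _ = ((1 - PowerSeries.C b * PowerSeries.X) * gen B') * v := by rw [h2]
          _ = (1 - PowerSeries.C b * PowerSeries.X) * F := by rw [hFdef]; ring
      have hrel : ∀ k : ℤ, S k = S' k - b * S' (k - 1) := by
        intro k
        rcases lt_or_ge k 0 with hk | hk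
        · rw [hS.1 _ hk, hS'def, cZ_neg _ hk, cZ_neg _ (by omega)]; ring
        · obtain ⟨K, rfl⟩ := Int.eq_ofNat_of_zero_le hk
          have hcoe : S (K : ℤ) =
              PowerSeries.coeff K (PowerSeries.mk (fun n : ℕ => S (n : ℤ))) := by
            rw [PowerSeries.coeff_mk]
          rw [hcoe, hmkS, coeff_cons]
          cases K with
          | zero =>
              rw [if_pos rfl, hS'def, cZ_coe,
                cZ_neg F (show ((0:ℕ):ℤ) - 1 < 0 by norm_num)]
              try ring
          | succ K =>
              rw [if_neg (by omega), hS'def, cZ_coe,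
                show ((K+1:ℕ):ℤ) - 1 = ((K:ℕ):ℤ) from by push_cast; ring, cZ_coe]
              simp
      -- matrices
      set nn : ℤ := (Multiset.card B' : ℤ) + 1 with hnn
      set D : Matrix (Fin (Multiset.card A)) (Fin (Multiset.card A)) R :=
        Matrix.of (fun p q : Fin (Multiset.card A) => S (c p + nn - ((q : ℕ) : ℤ))) with hD
      set Et : Matrix (Fin ((Multiset.card A)+1)) (Fin ((Multiset.card A)+1)) R :=
        Matrix.of (Fin.snoc
          (fun p : Fin (Multiset.card A) => fun r : Fin ((Multiset.card A)+1) => S' (c p + nn - ((r : ℕ) : ℤ)))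
          (fun r : Fin ((Multiset.card A)+1) => b ^ ((Multiset.card A) - (r : ℕ)))) with hEt
      have hEt_cast : ∀ (p : Fin (Multiset.card A)) (r : Fin ((Multiset.card A)+1)),
          Et (Fin.castSucc p) r = S' (c p + nn - ((r : ℕ) : ℤ)) := by
        intro p r
        rw [hEt]
        simp only [Matrix.of_apply, Fin.snoc_castSucc]
      have hEt_last : ∀ r : Fin ((Multiset.card A)+1), Et (Fin.last (Multiset.card A)) r = b ^ ((Multiset.card A) - (r : ℕ)) := by
        intro r
        rw [hEt]
        simp only [Matrix.of_apply, Fin.snoc_last]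
      -- D equals E~ * W on the relevant blocks
      have hEW_tl : ∀ p q : Fin (Multiset.card A),
          (Et * Wmat (Multiset.card A) b) (Fin.castSucc p) (Fin.castSucc q) = D p q := by
        intro p q
        rw [Matrix.mul_apply]
        rw [Wmat_col b (fun r => Et (Fin.castSucc p) r) (Fin.castSucc q)]
        have hq : ((Fin.castSucc q : Fin ((Multiset.card A)+1)) : ℕ) + 1 < (Multiset.card A) + 1 := by
          have := q.is_lt
          simp only [Fin.coe_castSucc]
          omega
        rw [dif_pos hq, hEt_cast, hEt_cast]
        have e1 : (((Fin.castSucc q : Fin ((Multiset.card A)+1)) : ℕ) : ℤ) = ((q : ℕ) : ℤ) := by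
          simp [Fin.coe_castSucc]
        have e2 : (((⟨((Fin.castSucc q : Fin ((Multiset.card A)+1)) : ℕ) + 1, hq⟩ : Fin ((Multiset.card A)+1)) : ℕ) : ℤ) =
            ((q : ℕ) : ℤ) + 1 := by
          simp [Fin.coe_castSucc]
        rw [e1, e2]
        have hk := hrel (c p + nn - ((q : ℕ) : ℤ))
        have e3 : c p + nn - ((q : ℕ) : ℤ) - 1 = c p + nn - (((q : ℕ) : ℤ) + 1) := by ring
        rw [e3] at hk
        rw [hD]
        simp only [Matrix.of_apply]
        rw [hk]
        ring
      have hEW_lr : ∀ q : Fin ((Multiset.card A)+1), (q : ℕ) < (Multiset.card A) → (Et * Wmat (Multiset.card A) b) (Fin.last (Multiset.card A)) q = 0 := by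
        intro q hq
        rw [Matrix.mul_apply, Wmat_col b (fun r => Et (Fin.last (Multiset.card A)) r) q,
          dif_pos (by omega), hEt_last, hEt_last]
        have e : (Multiset.card A) - (q : ℕ) = ((Multiset.card A) - (((⟨(q:ℕ)+1, by omega⟩ : Fin ((Multiset.card A)+1)) : Fin ((Multiset.card A)+1)) : ℕ)) + 1 := by
          simp only []
          omega
        rw [e, pow_succ]
        ring
      have hEW_ll : (Et * Wmat (Multiset.card A) b) (Fin.last (Multiset.card A)) (Fin.last (Multiset.card A)) = 1 := by
        rw [Matrix.mul_apply, Wmat_col b (fun r => Et (Fin.last (Multiset.card A)) r) (Fin.last (Multiset.card A)),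
          dif_neg (by simp), hEt_last]
        simp
      have hdetD : D.det = Et.det := by
        have h2 : (Et * Wmat (Multiset.card A) b).det = D.det := by
          rw [Matrix.det_succ_row (Et * Wmat (Multiset.card A) b) (Fin.last (Multiset.card A)),
            Finset.sum_eq_single (Fin.last (Multiset.card A))]
          · rw [hEW_ll, mul_one]
            have hsub : (Et * Wmat (Multiset.card A) b).submatrix (Fin.last (Multiset.card A)).succAbove
                (Fin.last (Multiset.card A)).succAbove = D := by
              ext p q
              rw [Matrix.submatrix_apply, Fin.succAbove_last]
              exact hEW_tl p q
            rw [hsub, Fin.val_last, ← two_mul, pow_mul]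
            norm_num
          · intro q _ hq
            have hq' : (q : ℕ) < (Multiset.card A) := by
              have h3 : (q : ℕ) < (Multiset.card A) + 1 := q.is_lt
              have h4 : (q : ℕ) ≠ (Multiset.card A) := by
                intro hh
                exact hq (Fin.ext (by simp [hh, Fin.val_last]))
              omega
            rw [hEW_lr q hq', mul_zero, zero_mul]
          · intro h; exact absurd (Finset.mem_univ _) h
        rw [← h2, Matrix.det_mul, det_Wmat, mul_one]
      -- now multiply by U
      set g : Fin ((Multiset.card A)+1) → R := fun r => cZ (gen A) ((r : ℕ) : ℤ) with hg
      have hg0 : g 0 = 1 := by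
        rw [hg]
        simp only [Fin.val_zero, Nat.cast_zero]
        rw [show ((0:ℤ)) = ((0:ℕ):ℤ) from rfl, cZ_coe,
          PowerSeries.coeff_zero_eq_constantCoeff_apply]
        exact constantCoeff_gen A
      -- column 0 of Et * U
      have hEU_c0 : ∀ p : Fin (Multiset.card A), (Et * Umat (Multiset.card A) g) (Fin.castSucc p) 0 = 0 := by
        intro p
        rw [Matrix.mul_apply, Umat_col0 g (fun r => Et (Fin.castSucc p) r)]
        have step1 : (∑ r : Fin ((Multiset.card A)+1), Et (Fin.castSucc p) r * g r) =
            ∑ j ∈ Finset.range ((Multiset.card A)+1),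
              cZ (gen A) (j : ℤ) * S' ((c p + nn) - (j : ℤ)) := by
          rw [← Fin.sum_univ_eq_sum_range
            (fun j : ℕ => cZ (gen A) (j : ℤ) * S' ((c p + nn) - (j : ℤ))) ((Multiset.card A)+1)]
          refine Finset.sum_congr rfl fun r _ => ?_
          rw [hEt_cast, hg]
          have e : c p + nn - ((r : ℕ) : ℤ) = (c p + nn) - ((r : ℕ) : ℤ) := by ring
          rw [e]
          ring
        rw [step1, conv hS' (le_refl _) (c p + nn)]
        refine cZ_gen_eq_zero _ ?_
        have := hc p
        rw [hnn]
        omega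
      have hEU_last0 : (Et * Umat (Multiset.card A) g) (Fin.last (Multiset.card A)) 0 =
          (A.map fun a => b - a).prod := by
        rw [Matrix.mul_apply, Umat_col0 g (fun r => Et (Fin.last (Multiset.card A)) r)]
        have step1 : (∑ r : Fin ((Multiset.card A)+1), Et (Fin.last (Multiset.card A)) r * g r) =
            ∑ j ∈ Finset.range ((Multiset.card A)+1), cZ (gen A) (j : ℤ) * b ^ ((Multiset.card A) - j) := by
          rw [← Fin.sum_univ_eq_sum_range
            (fun j : ℕ => cZ (gen A) (j : ℤ) * b ^ ((Multiset.card A) - j)) ((Multiset.card A)+1)]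
          refine Finset.sum_congr rfl fun r _ => ?_
          rw [hEt_last, hg]
          ring
        rw [step1]
        exact poly_sum A b
      have hEU_rest : ∀ (i : Fin ((Multiset.card A)+1)) (q : Fin ((Multiset.card A)+1)), q ≠ 0 →
          (Et * Umat (Multiset.card A) g) i q = Et i q := by
        intro i q hq
        rw [Matrix.mul_apply, Umat_col g (fun r => Et i r) hq]
      -- expand det (Et * U) along column 0
      have hdetEt : Et.det = (A.map fun a => b - a).prod * ((-1:R)^(Multiset.card A) *
          (Matrix.of fun p q : Fin (Multiset.card A) =>
            S' (c p + (Multiset.card B' : ℤ) - ((q : ℕ) : ℤ))).det) := by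
        have h1 : (Et * Umat (Multiset.card A) g).det = Et.det := by
          rw [Matrix.det_mul, det_Umat g hg0, mul_one]
        rw [← h1, Matrix.det_succ_column_zero, Finset.sum_eq_single (Fin.last (Multiset.card A))]
        · rw [hEU_last0, Fin.val_last]
          have hsub : (Et * Umat (Multiset.card A) g).submatrix (Fin.last (Multiset.card A)).succAbove Fin.succ =
              Matrix.of fun p q : Fin (Multiset.card A) =>
                S' (c p + (Multiset.card B' : ℤ) - ((q : ℕ) : ℤ)) := by
            ext p q
            rw [Matrix.submatrix_apply, Fin.succAbove_last,
              hEU_rest _ _ (Fin.succ_ne_zero q), hEt_cast]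
            simp only [Matrix.of_apply]
            congr 1
            rw [hnn, Fin.val_succ]
            push_cast
            ring
          rw [hsub]
          ring
        · intro i _ hi
          obtain ⟨p, rfl⟩ := Fin.exists_castSucc_eq.2 hi
          rw [hEU_c0 p, mul_zero, zero_mul]
        · intro h; exact absurd (Finset.mem_univ _) h
      -- assemble
      have hIH := IH S' hS' c hc
      have hcard : (Multiset.card (b ::ₘ B') : ℤ) = nn := by
        rw [hnn, Multiset.card_cons]
        push_cast
        ring
      have hgoalL : (Matrix.of fun p q : Fin (Multiset.card A) =>
          S (c p + (Multiset.card (b ::ₘ B') : ℤ) - ((q : ℕ) : ℤ))) = D := by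
        ext p q
        rw [hD]
        simp only [Matrix.of_apply]
        rw [hcard]
      rw [hgoalL, hdetD, hdetEt, hIH, prod_map_sub_comm A b]
      have hR : (A.map fun a => ((b ::ₘ B').map fun x => a - x).prod).prod =
          (A.map fun a => a - b).prod *
            (A.map fun a => (B'.map fun x => a - x).prod).prod := by
        rw [← Multiset.prod_map_mul]
        refine congrArg Multiset.prod (Multiset.map_congr rfl fun a _ => ?_)
        simp [Multiset.map_cons, Multiset.prod_cons]
      rw [hR]
      have hsq : ((-1:R) ^ Multiset.card A) * ((-1:R) ^ Multiset.card A) = 1 := by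
        rw [← pow_add, ← two_mul, pow_mul]
        norm_num
      calc (-1:R) ^ Multiset.card A * (Multiset.map (fun a => a - b) A).prod *
            ((-1:R) ^ Multiset.card A *
              ((Multiset.map (fun a => (Multiset.map (fun x => a - x) B').prod) A).prod *
                (Matrix.of fun p q : Fin (Multiset.card A) => SA (c p - ((q:ℕ):ℤ))).det))
          = (((-1:R) ^ Multiset.card A) * ((-1:R) ^ Multiset.card A)) *
              ((Multiset.map (fun a => a - b) A).prod *
                ((Multiset.map (fun a => (Multiset.map (fun x => a - x) B').prod) A).prod *
                  (Matrix.of fun p q : Fin (Multiset.card A) => SA (c p - ((q:ℕ):ℤ))).det)) := by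
            ring
        _ = (Multiset.map (fun a => a - b) A).prod *
              (Multiset.map (fun a => (Multiset.map (fun x => a - x) B').prod) A).prod *
              (Matrix.of fun p q : Fin (Multiset.card A) => SA (c p - ((q:ℕ):ℤ))).det := by
            rw [hsq]; ring

/-- Fin-indexed convolution: pairing a row of `S_{k-r}` values against the
shifted coefficients of `gen A` yields a coefficient of `gen B`. -/
lemma finconv {A B : Multiset R} {S : ℤ → R} (hS : IsSeriesOf A B S)
    {N : ℕ} (k : ℤ) (q0 : ℕ) (hq : q0 + Multiset.card A < N) :
    (∑ r : Fin N, S (k - ((r:ℕ) : ℤ)) * cZ (gen A) (((r:ℕ) : ℤ) - (q0 : ℤ))) =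
      cZ (gen B) (k - (q0 : ℤ)) := by
  rw [Fin.sum_univ_eq_sum_range
    (fun r : ℕ => S (k - (r:ℤ)) * cZ (gen A) ((r:ℤ) - (q0:ℤ))) N]
  have hsub : Finset.Icc q0 (q0 + Multiset.card A) ⊆ Finset.range N := by
    intro x hx
    simp only [Finset.mem_Icc] at hx
    simp only [Finset.mem_range]
    omega
  rw [← Finset.sum_subset hsub (fun x _ hxn => ?_)]
  · rw [show Finset.Icc q0 (q0 + Multiset.card A) =
        Finset.Ico q0 (q0 + Multiset.card A + 1) from (Finset.Ico_add_one_right_eq_Icc _ _).symm,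
      Finset.sum_Ico_eq_sum_range,
      show q0 + Multiset.card A + 1 - q0 = Multiset.card A + 1 from by omega,
      ← conv hS (le_refl (Multiset.card A)) (k - (q0:ℤ))]
    refine Finset.sum_congr rfl fun j _ => ?_
    have e1 : ((q0 + j : ℕ) : ℤ) = (q0 : ℤ) + (j : ℤ) := by push_cast; ring
    rw [e1, show (q0:ℤ) + (j:ℤ) - (q0:ℤ) = (j:ℤ) from by ring,
      show k - ((q0:ℤ) + (j:ℤ)) = k - (q0:ℤ) - (j:ℤ) from by ring]
    ring
  · simp only [Finset.mem_Icc, not_and_or, not_le] at hxn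
    rcases hxn with h | h
    · rw [cZ_neg _ (by push_cast; omega), mul_zero]
    · rw [cZ_gen_eq_zero _ (by push_cast; omega), mul_zero]

end FactorAux

open FactorAux in
/-- **Factorization property.** For alphabets `A` of cardinality `m` and `B` of
cardinality `n`, and partitions `I = (i_1 ≤ … ≤ i_m)`, `J = (j_1 ≤ … ≤ j_s)` such
that `(j_1, …, j_s, i_1 + n, …, i_m + n)` is a partition,
`S_{(j_1,…,j_s,i_1+n,…,i_m+n)}(A - B) = S_I(A) · R(A,B) · S_J(-B)`. -/
theorem factorization_property {R : Type*} [CommRing R] (m n s : ℕ) (A B : Multiset R)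
    (hA : Multiset.card A = m) (hB : Multiset.card B = n)
    (SAB SA SB : ℤ → R) (hSAB : IsSeriesOf A B SAB)
    (hSA : IsSeriesOf A 0 SA) (hSB : IsSeriesOf 0 B SB)
    (I : Fin m → ℕ) (hI : Monotone I) (J : Fin s → ℕ) (hJ : Monotone J)
    (hK : Monotone (Fin.append (fun q : Fin s => (J q : ℤ))
          (fun p : Fin m => (I p : ℤ) + n))) :
    schur SAB (Fin.append (fun q : Fin s => (J q : ℤ)) (fun p : Fin m => (I p : ℤ) + n)) =
      schur SA (fun p => (I p : ℤ)) *
        (A.map (fun a => (B.map fun b => a - b).prod)).prod *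
          schur SB (fun q => (J q : ℤ)) := by
  classical
  subst hA
  subst hB
  unfold schur
  set Kf : Fin (s + Multiset.card A) → ℤ :=
    Fin.append (fun q : Fin s => (J q : ℤ))
      (fun p : Fin (Multiset.card A) => (I p : ℤ) + (Multiset.card B : ℕ)) with hKf
  set Mmat : Matrix (Fin (s + Multiset.card A)) (Fin (s + Multiset.card A)) R :=
    Matrix.of (fun p q => SAB (Kf p + ((p:ℕ) : ℤ) - ((q:ℕ) : ℤ))) with hMmat
  set T : Matrix (Fin (s + Multiset.card A)) (Fin (s + Multiset.card A)) R :=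
    Matrix.of (fun r q => if (q:ℕ) < s then cZ (gen A) (((r:ℕ):ℤ) - ((q:ℕ):ℤ))
      else if r = q then (1:R) else 0) with hT
  have hdetT : T.det = 1 := by
    have htri : T.BlockTriangular OrderDual.toDual := by
      intro i j hij
      have hij' : i < j := by simpa using hij
      have hv : (i : ℕ) < (j : ℕ) := hij'
      rw [hT]
      simp only [Matrix.of_apply]
      by_cases h : (j : ℕ) < s
      · rw [if_pos h, cZ_neg _ (by push_cast; omega)]
      · rw [if_neg h, if_neg (Fin.ne_of_lt hij')]
    rw [Matrix.det_of_lowerTriangular _ htri]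
    refine Finset.prod_eq_one fun i _ => ?_
    rw [hT]
    simp only [Matrix.of_apply]
    by_cases h : (i : ℕ) < s
    · rw [if_pos h, show ((i:ℕ):ℤ) - ((i:ℕ):ℤ) = ((0:ℕ):ℤ) from by push_cast; ring,
        cZ_coe, PowerSeries.coeff_zero_eq_constantCoeff_apply]
      exact constantCoeff_gen A
    · rw [if_neg h]
      norm_num
  have hMT_left : ∀ (p q : Fin (s + Multiset.card A)), (q:ℕ) < s →
      (Mmat * T) p q = cZ (gen B) (Kf p + ((p:ℕ):ℤ) - ((q:ℕ):ℤ)) := by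
    intro p q hq
    rw [Matrix.mul_apply]
    have hterm : ∀ r : Fin (s + Multiset.card A),
        Mmat p r * T r q =
          SAB ((Kf p + ((p:ℕ):ℤ)) - ((r:ℕ):ℤ)) * cZ (gen A) (((r:ℕ):ℤ) - ((q:ℕ):ℤ)) := by
      intro r
      rw [hMmat, hT]
      simp only [Matrix.of_apply]
      rw [if_pos hq]
    rw [Finset.sum_congr rfl fun r _ => hterm r,
      finconv hSAB (Kf p + ((p:ℕ):ℤ)) (q:ℕ) (by omega)]
  have hMT_right : ∀ (p q : Fin (s + Multiset.card A)), ¬ ((q:ℕ) < s) →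
      (Mmat * T) p q = Mmat p q := by
    intro p q hq
    rw [Matrix.mul_apply]
    have hterm : ∀ r ∈ Finset.univ, Mmat p r * T r q =
        if r = q then Mmat p r else 0 := by
      intro r _
      rw [hT]
      simp only [Matrix.of_apply]
      rw [if_neg hq]
      split <;> simp
    rw [Finset.sum_congr rfl hterm,
      Finset.sum_ite_eq' Finset.univ q (fun r => Mmat p r), if_pos (Finset.mem_univ q)]
  -- blocks
  set SBm : Matrix (Fin s) (Fin s) R :=
    Matrix.of (fun p q : Fin s => SB ((J p : ℤ) + ((p:ℕ):ℤ) - ((q:ℕ):ℤ))) with hSBm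
  set Dm : Matrix (Fin (Multiset.card A)) (Fin (Multiset.card A)) R :=
    Matrix.of (fun p q => SAB (((fun p : Fin (Multiset.card A) => (I p : ℤ) + ((p:ℕ):ℤ)) p)
      + (Multiset.card B : ℤ) - ((q:ℕ):ℤ))) with hDm
  set Cm : Matrix (Fin s) (Fin (Multiset.card A)) R :=
    Matrix.of (fun p q => (Mmat * T) (finSumFinEquiv (Sum.inl p)) (finSumFinEquiv (Sum.inr q)))
      with hCm
  have hblocks : (Mmat * T).submatrix finSumFinEquiv finSumFinEquiv =
      Matrix.fromBlocks SBm Cm 0 Dm := by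
    ext i j
    cases i with
    | inl p =>
        cases j with
        | inl q =>
            rw [Matrix.submatrix_apply]
            simp only [finSumFinEquiv_apply_left, Matrix.fromBlocks_apply₁₁]
            rw [hMT_left _ _ (by simpa [Fin.coe_castAdd] using q.is_lt)]
            rw [hSBm]
            simp only [Matrix.of_apply]
            rw [eq_cZ_of_isSeriesOf_zero hSB, hKf, Fin.append_left]
            congr 2 <;> rw [Fin.coe_castAdd]
        | inr q =>
            rw [Matrix.submatrix_apply]
            simp only [Matrix.fromBlocks_apply₁₂]
            rw [hCm]
            simp only [Matrix.of_apply]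
    | inr p =>
        cases j with
        | inl q =>
            rw [Matrix.submatrix_apply]
            simp only [finSumFinEquiv_apply_left, finSumFinEquiv_apply_right,
              Matrix.fromBlocks_apply₂₁, Matrix.zero_apply]
            rw [hMT_left _ _ (by simpa [Fin.coe_castAdd] using q.is_lt)]
            rw [hKf, Fin.append_right]
            refine cZ_gen_eq_zero _ ?_
            have h1 : ((Fin.natAdd s p : Fin (s + Multiset.card A)) : ℕ) = s + (p:ℕ) :=
              Fin.coe_natAdd s p
            have h2 : ((Fin.castAdd (Multiset.card A) q : Fin (s + Multiset.card A)) : ℕ) =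
              (q : ℕ) := Fin.coe_castAdd _ q
            rw [h1, h2]
            have h3 : (q : ℕ) < s := q.is_lt
            push_cast
            omega
        | inr q =>
            rw [Matrix.submatrix_apply]
            simp only [finSumFinEquiv_apply_right, Matrix.fromBlocks_apply₂₂]
            rw [hMT_right _ _ (by simp [Fin.coe_natAdd])]
            rw [hMmat, hDm]
            simp only [Matrix.of_apply]
            rw [hKf, Fin.append_right]
            congr 1
            rw [Fin.coe_natAdd, Fin.coe_natAdd]
            push_cast
            ring
  have hstep1 : Mmat.det = SBm.det * Dm.det := by
    calc Mmat.det = Mmat.det * T.det := by rw [hdetT, mul_one]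
      _ = (Mmat * T).det := (Matrix.det_mul _ _).symm
      _ = ((Mmat * T).submatrix finSumFinEquiv finSumFinEquiv).det :=
          (Matrix.det_submatrix_equiv_self _ _).symm
      _ = SBm.det * Dm.det := by rw [hblocks, Matrix.det_fromBlocks_zero₂₁]
  have hstep2 := stepL A SA hSA B SAB hSAB
    (fun p : Fin (Multiset.card A) => (I p : ℤ) + ((p:ℕ):ℤ))
    (fun p => by positivity)
  have hSAm : (Matrix.of fun p q : Fin (Multiset.card A) =>
      SA ((fun p : Fin (Multiset.card A) => (I p : ℤ) + ((p:ℕ):ℤ)) p - ((q:ℕ):ℤ))) =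
      (Matrix.of fun p q : Fin (Multiset.card A) =>
        SA ((fun p : Fin (Multiset.card A) => (I p : ℤ)) p + ((p:ℕ):ℤ) - ((q:ℕ):ℤ))) := by
    ext p q
    rfl
  rw [hstep1, hDm, hstep2, hSAm]
  ring
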